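/- Let q₀ ≥ 2 and let g_j denote the genus of the j-th Garcia–Stichtenoth curve, satisfying g_j ≤ n_j/(q₀-1) where n_j = q₀^{j-1}(q₀²-1). Then for n = q₀^{j+1}(q₀²-1), k = (ℓ - g_j + 1)(q₀-1)², and d = n - ℓq₀² - 2q₀^{j+1}(q₀-2), the inequality d/n + (k/n)·q₀²/(q₀-1)² ≥ 1 - 3/(q₀+1) + q₀²/n holds. -/

import Mathlib

/-- Rate–distance estimate for codes from the Garcia–Stichtenoth tower: with
`n_j = q₀^{j-1}(q₀²-1)`, `g_j ≤ n_j/(q₀-1)`, `g_j ≤ ℓ ≤ n_j`, `n = q₀^{j+1}(q₀²-1)`,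
`k = (ℓ - g_j + 1)(q₀-1)²` and `d = n - ℓq₀² - 2q₀^{j+1}(q₀-2)`, one has
`d/n + (k/n)·q₀²/(q₀-1)² ≥ 1 - 3/(q₀+1) + q₀²/n`. -/
theorem stmt11 (q₀ j : ℕ) (hq : 2 ≤ q₀) (hj : 1 ≤ j) (g ℓ : ℝ)
    (hg : g ≤ (q₀ : ℝ) ^ (j - 1) * ((q₀ : ℝ) ^ 2 - 1) / ((q₀ : ℝ) - 1))
    (hℓ₁ : g ≤ ℓ) (hℓ₂ : ℓ ≤ (q₀ : ℝ) ^ (j - 1) * ((q₀ : ℝ) ^ 2 - 1)) :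
    ((q₀ : ℝ) ^ (j + 1) * ((q₀ : ℝ) ^ 2 - 1) - ℓ * (q₀ : ℝ) ^ 2
          - 2 * (q₀ : ℝ) ^ (j + 1) * ((q₀ : ℝ) - 2))
        / ((q₀ : ℝ) ^ (j + 1) * ((q₀ : ℝ) ^ 2 - 1))
      + (ℓ - g + 1) * ((q₀ : ℝ) - 1) ^ 2 / ((q₀ : ℝ) ^ (j + 1) * ((q₀ : ℝ) ^ 2 - 1))
          * ((q₀ : ℝ) ^ 2 / ((q₀ : ℝ) - 1) ^ 2)
      ≥ 1 - 3 / ((q₀ : ℝ) + 1)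
        + (q₀ : ℝ) ^ 2 / ((q₀ : ℝ) ^ (j + 1) * ((q₀ : ℝ) ^ 2 - 1)) := by
  obtain ⟨i, rfl⟩ : ∃ i, j = i + 1 := ⟨j - 1, (Nat.succ_pred_eq_of_pos hj).symm⟩
  simp only [Nat.add_sub_cancel] at *
  have hQ : (2:ℝ) ≤ (q₀:ℝ) := by exact_mod_cast hq
  have h1 : (0:ℝ) < (q₀:ℝ) - 1 := by linarith
  have h2 : (0:ℝ) < (q₀:ℝ) ^ 2 - 1 := by nlinarith
  have h3 : (0:ℝ) < (q₀:ℝ) + 1 := by linarith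
  have hp : (0:ℝ) < (q₀:ℝ) ^ i := by positivity
  have hp2 : (0:ℝ) < (q₀:ℝ) ^ (i + 1 + 1) := by positivity
  have hN : (0:ℝ) < (q₀:ℝ) ^ (i + 1 + 1) * ((q₀:ℝ) ^ 2 - 1) := by positivity
  have hg' : g * ((q₀:ℝ) - 1) ≤ (q₀:ℝ) ^ i * ((q₀:ℝ) ^ 2 - 1) := by
    rw [div_eq_mul_inv] at hg
    calc g * ((q₀:ℝ) - 1) ≤ ((q₀:ℝ) ^ i * ((q₀:ℝ) ^ 2 - 1) * ((q₀:ℝ) - 1)⁻¹) * ((q₀:ℝ) - 1) := by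
          apply mul_le_mul_of_nonneg_right hg h1.le
      _ = (q₀:ℝ) ^ i * ((q₀:ℝ) ^ 2 - 1) := by field_simp
  have hpow : (q₀:ℝ) ^ (i + 1 + 1) = (q₀:ℝ) ^ i * (q₀:ℝ) ^ 2 := by ring
  have heq : (ℓ - g + 1) * ((q₀:ℝ) - 1) ^ 2 / ((q₀:ℝ) ^ (i + 1 + 1) * ((q₀:ℝ) ^ 2 - 1))
      * ((q₀:ℝ) ^ 2 / ((q₀:ℝ) - 1) ^ 2)
      = (ℓ - g + 1) * (q₀:ℝ) ^ 2 / ((q₀:ℝ) ^ (i + 1 + 1) * ((q₀:ℝ) ^ 2 - 1)) := by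
    field_simp
  rw [ge_iff_le, heq, ← add_div, le_div_iff₀ hN]
  have key : g * (q₀:ℝ) ^ 2 * ((q₀:ℝ) - 1) ≤ (q₀:ℝ) ^ (i + 1 + 1) * ((q₀:ℝ) ^ 2 - 1) := by
    calc g * (q₀:ℝ) ^ 2 * ((q₀:ℝ) - 1) = (g * ((q₀:ℝ) - 1)) * (q₀:ℝ) ^ 2 := by ring
      _ ≤ ((q₀:ℝ) ^ i * ((q₀:ℝ) ^ 2 - 1)) * (q₀:ℝ) ^ 2 := by nlinarith
      _ = (q₀:ℝ) ^ (i + 1 + 1) * ((q₀:ℝ) ^ 2 - 1) := by rw [hpow]; ring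
  have expand : (1 - 3 / ((q₀:ℝ) + 1)) * ((q₀:ℝ) ^ (i + 1 + 1) * ((q₀:ℝ) ^ 2 - 1))
      = (q₀:ℝ) ^ (i + 1 + 1) * (((q₀:ℝ) - 2) * ((q₀:ℝ) - 1)) := by
    field_simp
    ring
  rw [add_mul, expand, div_mul_cancel₀ _ hN.ne']
  nlinarith [mul_pos hp2 h1, key, h1]
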